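/- (Symmetry step, equation (5) of the paper, for the binary erasure channel.) Let M be any n × n' matrix over F_2, let V be uniformly distributed on F_2^n, let X = V·M, and let Z be the BEC(ε) output of X. Then for any two disjoint subsets A, B ⊆ {1,…,n}, the conditional mutual information I(V_A; Z | V_B = b) (computed under the conditional distribution given the event {V_B = b}) takes the same value for every b ∈ F_2^{B}; consequently each such value equals I(V_A; Z | V_B). -/

import Mathlib

open scoped Classical

noncomputable section

/-- `p` is a probability mass function on the finite sample space `Ω`. -/
def IsPMF {Ω : Type} [Fintype Ω] (p : Ω → ℝ) : Prop :=
  (∀ ω, 0 ≤ p ω) ∧ ∑ ω, p ω = 1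

/-- `P(X = x)`: the probability of the event `{X = x}` under the pmf `p`. -/
def prob {Ω : Type} [Fintype Ω] (p : Ω → ℝ) {α : Type} (X : Ω → α) (x : α) : ℝ :=
  ∑ ω, if X ω = x then p ω else 0

/-- Shannon entropy of `X` in bits (logarithm base 2). -/
def entropy {Ω : Type} [Fintype Ω] (p : Ω → ℝ) {α : Type} [Fintype α] (X : Ω → α) : ℝ :=
  -∑ x, prob p X x * Real.logb 2 (prob p X x)

/-- Mutual information `I(X;Y) = H(X) + H(Y) - H((X,Y))` in bits. -/
def mutInfo {Ω : Type} [Fintype Ω] (p : Ω → ℝ) {α β : Type} [Fintype α] [Fintype β]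
    (X : Ω → α) (Y : Ω → β) : ℝ :=
  entropy p X + entropy p Y - entropy p fun ω => (X ω, Y ω)

/-- Conditional mutual information
`I(X;Y∣W) = H((X,W)) + H((Y,W)) - H((X,Y,W)) - H(W)` in bits. -/
def condMutInfo {Ω : Type} [Fintype Ω] (p : Ω → ℝ) {α β γ : Type}
    [Fintype α] [Fintype β] [Fintype γ] (X : Ω → α) (Y : Ω → β) (W : Ω → γ) : ℝ :=
  entropy p (fun ω => (X ω, W ω)) + entropy p (fun ω => (Y ω, W ω))
    - entropy p (fun ω => (X ω, Y ω, W ω)) - entropy p W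

/-- The conditional pmf of `p` given the event `{W = b}`. -/
def condOn {Ω : Type} [Fintype Ω] (p : Ω → ℝ) {α : Type} (W : Ω → α) (b : α) : Ω → ℝ :=
  fun ω => if W ω = b then p ω / prob p W b else 0

section Aux
variable {Ω : Type} [Fintype Ω] {α β γ : Type}

lemma prob_nonneg (p : Ω → ℝ) (hp : ∀ ω, 0 ≤ p ω) (X : Ω → α) (x : α) : 0 ≤ prob p X x :=
  Finset.sum_nonneg fun ω _ => by split <;> simp [hp ω]

lemma prob_comp (p : Ω → ℝ) [Fintype α] (g : α → β) (X : Ω → α) (y : β) :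
    prob p (fun ω => g (X ω)) y = ∑ x, if g x = y then prob p X x else 0 := by
  unfold prob
  have h1 : ∀ x : α, (if g x = y then (∑ ω, if X ω = x then p ω else 0) else 0)
      = ∑ ω, if X ω = x then (if g x = y then p ω else 0) else 0 := by
    intro x; split_ifs with h <;> simp [h]
  simp only [h1]
  rw [Finset.sum_comm]
  apply Finset.sum_congr rfl
  intro ω _
  rw [Finset.sum_ite_eq]
  simp

lemma prob_fst (p : Ω → ℝ) [Fintype β] (X : Ω → α) (Y : Ω → β) (x : α) :
    prob p X x = ∑ y, prob p (fun ω => (X ω, Y ω)) (x, y) := by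
  unfold prob
  rw [Finset.sum_comm]
  apply Finset.sum_congr rfl
  intro ω _
  by_cases h : X ω = x <;> simp [h, Prod.ext_iff, Finset.sum_ite_eq]

lemma prob_snd (p : Ω → ℝ) [Fintype α] (X : Ω → α) (Y : Ω → β) (y : β) :
    prob p Y y = ∑ x, prob p (fun ω => (X ω, Y ω)) (x, y) := by
  unfold prob
  rw [Finset.sum_comm]
  apply Finset.sum_congr rfl
  intro ω _
  by_cases h : Y ω = y <;> simp [h, Prod.ext_iff, Finset.sum_ite_eq]

lemma sum_prob_eq_one (p : Ω → ℝ) (hp : IsPMF p) [Fintype α] (X : Ω → α) :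
    ∑ x, prob p X x = 1 := by
  unfold prob
  rw [Finset.sum_comm]
  have h : ∀ ω : Ω, (∑ x, if X ω = x then p ω else 0) = p ω := by
    intro ω; rw [Finset.sum_ite_eq]; simp
  simp only [h]; exact hp.2

lemma entropy_congr {q1 q2 : Ω → ℝ} [Fintype α] [Fintype β] (e : α ≃ β)
    {X1 : Ω → α} {X2 : Ω → β} (h : ∀ x, prob q1 X1 x = prob q2 X2 (e x)) :
    entropy q1 X1 = entropy q2 X2 := by
  unfold entropy
  rw [← Equiv.sum_comp e (fun y => prob q2 X2 y * Real.logb 2 (prob q2 X2 y))]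
  simp only [h]

lemma prob_comp_equiv (q : Ω → ℝ) [Fintype α] [Fintype β] (e : α ≃ β) (X : Ω → α) (x : α) :
    prob q (fun ω => e (X ω)) (e x) = prob q X x := by
  unfold prob
  apply Finset.sum_congr rfl
  intro ω _
  simp [Equiv.apply_eq_iff_eq]

lemma entropy_comp_equiv (q : Ω → ℝ) [Fintype α] [Fintype β] (e : α ≃ β) (X : Ω → α) :
    entropy q (fun ω => e (X ω)) = entropy q X :=
  (entropy_congr e (fun x => (prob_comp_equiv q e X x).symm)).symm

lemma prob_condOn (p : Ω → ℝ) (W : Ω → γ) (b : γ) (Y : Ω → β) (y : β) :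
    prob (condOn p W b) Y y = prob p (fun ω => (Y ω, W ω)) (y, b) / prob p W b := by
  conv_lhs => rw [prob]
  conv_rhs => rw [prob]
  unfold condOn
  rw [Finset.sum_div]
  apply Finset.sum_congr rfl
  intro ω _
  by_cases h1 : Y ω = y <;> by_cases h2 : W ω = b <;> simp [h1, h2, Prod.ext_iff]

end Aux
section Chain
variable {Ω : Type} [Fintype Ω] {α β γ : Type}

lemma entropy_pair (p : Ω → ℝ) (hp : IsPMF p) [Fintype α] [Fintype γ] (X : Ω → α) (W : Ω → γ) :
    entropy p (fun ω => (X ω, W ω))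
      = entropy p W + ∑ b, prob p W b * entropy (condOn p W b) X := by
  have hJnn : ∀ (x : α) (b : γ), 0 ≤ prob p (fun ω => (X ω, W ω)) (x, b) :=
    fun x b => prob_nonneg p hp.1 _ _
  have hw : ∀ b, prob p W b = ∑ x, prob p (fun ω => (X ω, W ω)) (x, b) :=
    fun b => prob_snd p X W b
  have key : ∀ b : γ,
      (∑ x, prob p (fun ω => (X ω, W ω)) (x, b)
          * Real.logb 2 (prob p (fun ω => (X ω, W ω)) (x, b)))
        = prob p W b * Real.logb 2 (prob p W b)
          + prob p W b * ∑ x, prob (condOn p W b) X x * Real.logb 2 (prob (condOn p W b) X x) := by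
    intro b
    by_cases hb : prob p W b = 0
    · have hz : ∀ x, prob p (fun ω => (X ω, W ω)) (x, b) = 0 := by
        intro x
        have h0 : ∑ x, prob p (fun ω => (X ω, W ω)) (x, b) = 0 := by rw [← hw b]; exact hb
        have := Finset.single_le_sum (f := fun x => prob p (fun ω => (X ω, W ω)) (x, b))
          (fun x _ => hJnn x b) (Finset.mem_univ x)
        exact le_antisymm (by rw [h0] at this; exact this) (hJnn x b)
      have hr0 : ∀ x, prob (condOn p W b) X x = 0 := by
        intro x
        rw [prob_condOn, hz x, zero_div]
      simp [hz, hb, hr0]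
    · have hr : ∀ x, prob (condOn p W b) X x
          = prob p (fun ω => (X ω, W ω)) (x, b) / prob p W b :=
        fun x => prob_condOn p W b X x
      have hJ : ∀ x, prob p (fun ω => (X ω, W ω)) (x, b)
          = prob p W b * prob (condOn p W b) X x := by
        intro x; rw [hr x]; field_simp
      have hsum1 : ∑ x, prob (condOn p W b) X x = 1 := by
        simp only [hr]
        rw [← Finset.sum_div, ← hw b]
        exact div_self hb
      have hterm : ∀ x : α, prob p (fun ω => (X ω, W ω)) (x, b)
            * Real.logb 2 (prob p (fun ω => (X ω, W ω)) (x, b))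
          = prob p W b * prob (condOn p W b) X x * Real.logb 2 (prob p W b)
            + prob p W b * (prob (condOn p W b) X x
                * Real.logb 2 (prob (condOn p W b) X x)) := by
        intro x
        rw [hJ x]
        by_cases hrx : prob (condOn p W b) X x = 0
        · simp [hrx]
        · rw [Real.logb_mul hb hrx]; ring
      rw [Finset.sum_congr rfl fun x _ => hterm x, Finset.sum_add_distrib,
        ← Finset.sum_mul, ← Finset.mul_sum, ← Finset.mul_sum, hsum1]
      ring
  unfold entropy
  rw [Fintype.sum_prod_type, Finset.sum_comm]
  simp only [key]
  rw [Finset.sum_add_distrib]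
  simp only [mul_neg, Finset.sum_neg_distrib]
  ring

end Chain
section Chain2
variable {Ω : Type} [Fintype Ω] {α β β' γ : Type}

lemma condMutInfo_eq (p : Ω → ℝ) (hp : IsPMF p) [Fintype α] [Fintype β] [Fintype γ]
    (X : Ω → α) (Y : Ω → β) (W : Ω → γ) :
    condMutInfo p X Y W = ∑ b, prob p W b * mutInfo (condOn p W b) X Y := by
  have h4 : entropy p (fun ω => (X ω, Y ω, W ω))
      = entropy p (fun ω => ((X ω, Y ω), W ω)) := by
    have := entropy_comp_equiv p (Equiv.prodAssoc α β γ) (fun ω => ((X ω, Y ω), W ω))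
    simpa [Equiv.prodAssoc] using this
  unfold condMutInfo mutInfo
  rw [entropy_pair p hp X W, entropy_pair p hp Y W, h4,
    entropy_pair p hp (fun ω => (X ω, Y ω)) W]
  simp only [mul_add, mul_sub]
  rw [Finset.sum_sub_distrib, Finset.sum_add_distrib]
  ring

lemma mutInfo_congr {q1 q2 : Ω → ℝ} [Fintype α] [Fintype β] [Fintype β']
    (e : β ≃ β') (X : Ω → α) (Y1 : Ω → β) (Y2 : Ω → β')
    (h : ∀ x y, prob q1 (fun ω => (X ω, Y1 ω)) (x, y)
      = prob q2 (fun ω => (X ω, Y2 ω)) (x, e y)) :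
    mutInfo q1 X Y1 = mutInfo q2 X Y2 := by
  have hX : ∀ x, prob q1 X x = prob q2 X ((Equiv.refl α) x) := by
    intro x
    rw [prob_fst q1 X Y1 x, Equiv.refl_apply, prob_fst q2 X Y2 x,
      ← Equiv.sum_comp e (fun y => prob q2 (fun ω => (X ω, Y2 ω)) (x, y))]
    exact Finset.sum_congr rfl fun y _ => h x y
  have hY : ∀ y, prob q1 Y1 y = prob q2 Y2 (e y) := by
    intro y
    rw [prob_snd q1 X Y1 y, prob_snd q2 X Y2 (e y)]
    exact Finset.sum_congr rfl fun x _ => h x y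
  have hJ : ∀ u : α × β, prob q1 (fun ω => (X ω, Y1 ω)) u
      = prob q2 (fun ω => (X ω, Y2 ω)) (((Equiv.refl α).prodCongr e) u) := by
    intro u
    exact h u.1 u.2
  unfold mutInfo
  rw [entropy_congr (Equiv.refl α) hX, entropy_congr e hY,
    entropy_congr ((Equiv.refl α).prodCongr e) hJ]

end Chain2
/-- **Equation (5)** for the BEC: with `V` uniform on `F_2^n`, `X = V⬝M`, and `Z` the BEC(ε)
output of `X`, for any disjoint `A, B` the conditional mutual information
`I(V_A ; Z ∣ V_B = b)` (computed under the conditional distribution given `{V_B = b}`) equals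
`I(V_A ; Z ∣ V_B)` for every `b`; in particular it does not depend on `b`. -/
theorem stmt6 {Ω : Type} [Fintype Ω] (p : Ω → ℝ) (hp : IsPMF p)
    {n n' : ℕ} (M : Matrix (Fin n) (Fin n') (ZMod 2))
    (V : Ω → (Fin n → ZMod 2)) (Θ : Ω → (Fin n' → Bool))
    (ε : ℝ) (hε : ε ∈ Set.Icc (0 : ℝ) 1)
    (hV : ∀ v, prob p V v = (1 / 2 : ℝ) ^ n)
    (hjoint : ∀ v θ, prob p (fun ω => (V ω, Θ ω)) (v, θ)
      = prob p V v * ∏ j, (if θ j then ε else 1 - ε))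
    (Z : Ω → (Fin n' → Option (ZMod 2)))
    (hZ : ∀ ω j, Z ω j = if Θ ω j then none else some (Matrix.vecMul (V ω) M j))
    (A B : Finset (Fin n)) (hAB : Disjoint A B)
    (b : {i // i ∈ B} → ZMod 2) :
    mutInfo (condOn p (fun ω (i : {i // i ∈ B}) => V ω i.1) b)
        (fun ω (i : {i // i ∈ A}) => V ω i.1) Z
      = condMutInfo p (fun ω (i : {i // i ∈ A}) => V ω i.1) Z
          (fun ω (i : {i // i ∈ B}) => V ω i.1) := by
  classical
  have key : ∀ b1 b2 : ({i // i ∈ B} → ZMod 2),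
      mutInfo (condOn p (fun ω (i : {i // i ∈ B}) => V ω i.1) b1)
          (fun ω (i : {i // i ∈ A}) => V ω i.1) Z
        = mutInfo (condOn p (fun ω (i : {i // i ∈ B}) => V ω i.1) b2)
          (fun ω (i : {i // i ∈ A}) => V ω i.1) Z := by
    intro b1 b2
    set c : Fin n → ZMod 2 := fun i => if h : i ∈ B then b2 ⟨i, h⟩ - b1 ⟨i, h⟩ else 0 with hc
    set d : Fin n' → ZMod 2 := Matrix.vecMul c M with hd
    set T : (Fin n' → Option (ZMod 2)) ≃ (Fin n' → Option (ZMod 2)) :=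
      Equiv.piCongrRight fun j => (Equiv.addRight (d j)).optionCongr with hT
    have hTapp : ∀ (z : Fin n' → Option (ZMod 2)) (j : Fin n'),
        T z j = Option.map (· + d j) (z j) := by
      intro z j
      simp [hT]
    -- pointwise facts about v + c
    have hAv : ∀ v : Fin n → ZMod 2,
        (fun i : {i // i ∈ A} => (v + c) i.1) = (fun i : {i // i ∈ A} => v i.1) := by
      intro v; funext i
      have hi : (i.1 : Fin n) ∉ B := Finset.disjoint_left.mp hAB i.2
      simp [hc, hi]
    have hBiff : ∀ v : Fin n → ZMod 2,
        ((fun i : {i // i ∈ B} => (v + c) i.1) = b2)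
          ↔ ((fun i : {i // i ∈ B} => v i.1) = b1) := by
      intro v
      have hB : (fun i : {i // i ∈ B} => (v + c) i.1)
          = (fun i : {i // i ∈ B} => v i.1) + (b2 - b1) := by
        funext i
        simp [hc, i.2]
      rw [hB]
      constructor
      · intro h
        have h2 : (fun i : {i // i ∈ B} => v i.1) = b2 - (b2 - b1) := by
          rwa [eq_sub_iff_add_eq]
        simpa [sub_sub_cancel] using h2
      · intro h
        rw [h]
        abel
    have hFiff : ∀ (v : Fin n → ZMod 2) (θ : Fin n' → Bool) (z : Fin n' → Option (ZMod 2)),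
        ((fun j => if θ j then none else some (Matrix.vecMul (v + c) M j)) = T z)
          ↔ ((fun j => if θ j then none else some (Matrix.vecMul v M j)) = z) := by
      intro v θ z
      have hF : (fun j => if θ j then none else some (Matrix.vecMul (v + c) M j))
          = T (fun j => if θ j then none else some (Matrix.vecMul v M j)) := by
        funext j
        rw [hTapp]
        by_cases hθ : θ j <;> simp [hθ, Matrix.add_vecMul, hd]
      rw [hF]
      exact T.apply_eq_iff_eq
    -- the observable as a function of (V, Θ)
    set g : ((Fin n → ZMod 2) × (Fin n' → Bool))
        → (({i // i ∈ A} → ZMod 2) × (Fin n' → Option (ZMod 2))) × ({i // i ∈ B} → ZMod 2) :=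
      fun vθ => (((fun i : {i // i ∈ A} => vθ.1 i.1),
          fun j => if vθ.2 j then none else some (Matrix.vecMul vθ.1 M j)),
        fun i : {i // i ∈ B} => vθ.1 i.1) with hg
    have hobs : (fun ω => (((fun i : {i // i ∈ A} => V ω i.1), Z ω),
          (fun i : {i // i ∈ B} => V ω i.1)))
        = fun ω => g (V ω, Θ ω) := by
      funext ω
      have hZω : Z ω = fun j => if Θ ω j then none else some (Matrix.vecMul (V ω) M j) := by
        funext j; exact hZ ω j
      simp [hg, hZω]
    -- numerator equality
    have hnum : ∀ (a : {i // i ∈ A} → ZMod 2) (z : Fin n' → Option (ZMod 2)),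
        prob p (fun ω => (((fun i : {i // i ∈ A} => V ω i.1), Z ω),
            (fun i : {i // i ∈ B} => V ω i.1))) ((a, z), b1)
          = prob p (fun ω => (((fun i : {i // i ∈ A} => V ω i.1), Z ω),
            (fun i : {i // i ∈ B} => V ω i.1))) ((a, T z), b2) := by
      intro a z
      rw [hobs, prob_comp p g (fun ω => (V ω, Θ ω)) ((a, z), b1),
        prob_comp p g (fun ω => (V ω, Θ ω)) ((a, T z), b2)]
      apply Fintype.sum_equiv ((Equiv.addRight c).prodCongr (Equiv.refl (Fin n' → Bool)))
      rintro ⟨v, θ⟩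
      simp only [Equiv.prodCongr_apply, Equiv.coe_refl, Prod.map, Equiv.coe_addRight, id_eq]
      have hweight : prob p (fun ω => (V ω, Θ ω)) (v + c, θ)
          = prob p (fun ω => (V ω, Θ ω)) (v, θ) := by
        rw [hjoint, hjoint, hV, hV]
      have hcond : (g (v + c, θ) = ((a, T z), b2)) ↔ (g (v, θ) = ((a, z), b1)) := by
        simp only [hg, Prod.mk.injEq]
        rw [hAv v, hFiff v θ z, hBiff v]
      rw [hweight]
      by_cases hcc : g (v, θ) = ((a, z), b1)
      · rw [if_pos hcc, if_pos (hcond.mpr hcc)]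
      · rw [if_neg hcc, if_neg (fun hh => hcc (hcond.mp hh))]
    -- equality of the weights
    have hwB : prob p (fun ω (i : {i // i ∈ B}) => V ω i.1) b1
        = prob p (fun ω (i : {i // i ∈ B}) => V ω i.1) b2 := by
      rw [prob_comp p (fun (v : Fin n → ZMod 2) (i : {i // i ∈ B}) => v i.1) V b1,
        prob_comp p (fun (v : Fin n → ZMod 2) (i : {i // i ∈ B}) => v i.1) V b2]
      apply Fintype.sum_equiv (Equiv.addRight c)
      intro v
      simp only [Equiv.coe_addRight]
      rw [hV, hV (v + c)]
      by_cases hcc : (fun i : {i // i ∈ B} => v i.1) = b1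
      · rw [if_pos hcc]; exact (if_pos ((hBiff v).mpr hcc)).symm
      · rw [if_neg hcc]; exact (if_neg (fun hh => hcc ((hBiff v).mp hh))).symm
    -- conditional joint distributions agree up to T
    have hcj : ∀ (a : {i // i ∈ A} → ZMod 2) (z : Fin n' → Option (ZMod 2)),
        prob (condOn p (fun ω (i : {i // i ∈ B}) => V ω i.1) b1)
            (fun ω => ((fun i : {i // i ∈ A} => V ω i.1 : {i // i ∈ A} → ZMod 2), Z ω)) (a, z)
          = prob (condOn p (fun ω (i : {i // i ∈ B}) => V ω i.1) b2)
            (fun ω => ((fun i : {i // i ∈ A} => V ω i.1 : {i // i ∈ A} → ZMod 2), Z ω)) (a, T z) := by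
      intro a z
      rw [prob_condOn, prob_condOn, hnum a z, hwB]
    exact mutInfo_congr T (fun ω (i : {i // i ∈ A}) => V ω i.1) Z Z hcj
  rw [condMutInfo_eq p hp]
  have h2 : ∑ b', prob p (fun ω (i : {i // i ∈ B}) => V ω i.1) b'
        * mutInfo (condOn p (fun ω (i : {i // i ∈ B}) => V ω i.1) b')
          (fun ω (i : {i // i ∈ A}) => V ω i.1) Z
      = ∑ b', prob p (fun ω (i : {i // i ∈ B}) => V ω i.1) b'
        * mutInfo (condOn p (fun ω (i : {i // i ∈ B}) => V ω i.1) b)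
          (fun ω (i : {i // i ∈ A}) => V ω i.1) Z :=
    Finset.sum_congr rfl fun b' _ => by rw [key b' b]
  rw [h2, ← Finset.sum_mul, sum_prob_eq_one p hp, one_mul]
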